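/- Let 0 < ε < 1/5, let ξ ∈ ℝ^r be a nonzero entrywise nonnegative vector, and let q_1, …, q_n ∈ ℝ^r be nonzero entrywise nonnegative vectors ordered so that ‖q_1‖₂ ≥ ⋯ ≥ ‖q_n‖₂, each satisfying q_kᵀξ ≥ (1−ε)·‖q_k‖₂·‖ξ‖₂. Let u_1, …, u_n be positive reals such that u_k ≤ (1+ε)·u_{k'} for all k, k' ∈ [n]. Let C > 0 and let S* ⊆ [n] satisfy ‖Σ_{k∈S*} q_k‖₂ ≥ C and |S*| ≥ 1/ε. Assume ‖Σ_{k=1}^n q_k‖₂ ≥ C and let m be the least index with ‖Σ_{k=1}^m q_k‖₂ ≥ C. Then Σ_{k=1}^m u_k ≤ (1/(1−5ε) + ε)·(1+ε)·Σ_{k∈S*} u_k. -/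

import Mathlib

open RealInnerProductSpace


lemma aligned_inner_unit {E : Type*} [NormedAddCommGroup E] [InnerProductSpace ℝ E]
    (β : ℝ) (hβ0 : 0 ≤ β) (hβ1 : β ≤ 1) (e x y : E) (he : ‖e‖ = 1)
    (hx : β * ‖x‖ ≤ ⟪x, e⟫) (hy : β * ‖y‖ ≤ ⟪y, e⟫) :
    (2*β^2 - 1) * (‖x‖ * ‖y‖) ≤ ⟪x, y⟫ := by
  have hee : ⟪e, e⟫ = (1:ℝ) := by
    rw [real_inner_self_eq_norm_sq, he]; norm_num
  have hinner : ⟪x - ⟪x,e⟫ • e, y - ⟪y,e⟫ • e⟫ = ⟪x,y⟫ - ⟪x,e⟫*⟪y,e⟫ := by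
    simp only [inner_sub_left, inner_sub_right, real_inner_smul_left, real_inner_smul_right,
      hee, real_inner_comm e y]
    ring
  have hnx : ‖x - ⟪x,e⟫ • e‖^2 = ‖x‖^2 - ⟪x,e⟫^2 := by
    rw [norm_sub_sq_real, real_inner_smul_right, norm_smul, Real.norm_eq_abs, he,
      mul_one]
    rw [sq_abs]
    ring
  have hny : ‖y - ⟪y,e⟫ • e‖^2 = ‖y‖^2 - ⟪y,e⟫^2 := by
    rw [norm_sub_sq_real, real_inner_smul_right, norm_smul, Real.norm_eq_abs, he,
      mul_one]
    rw [sq_abs]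
    ring
  set wx := x - ⟪x,e⟫ • e
  set wy := y - ⟪y,e⟫ • e
  have hcs : -(‖wx‖ * ‖wy‖) ≤ ⟪wx, wy⟫ := by
    have h := abs_real_inner_le_norm wx wy
    have := abs_le.mp h
    linarith [this.1]
  have hxnn : (0:ℝ) ≤ ‖x‖ := norm_nonneg x
  have hynn : (0:ℝ) ≤ ‖y‖ := norm_nonneg y
  have hwxnn : (0:ℝ) ≤ ‖wx‖ := norm_nonneg wx
  have hwynn : (0:ℝ) ≤ ‖wy‖ := norm_nonneg wy
  have hbx : 0 ≤ β * ‖x‖ := mul_nonneg hβ0 hxnn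
  have hby : 0 ≤ β * ‖y‖ := mul_nonneg hβ0 hynn
  have h1 : ‖wx‖^2 ≤ (1 - β^2) * ‖x‖^2 := by nlinarith [sq_nonneg (⟪x,e⟫ - β*‖x‖)]
  have h2 : ‖wy‖^2 ≤ (1 - β^2) * ‖y‖^2 := by nlinarith [sq_nonneg (⟪y,e⟫ - β*‖y‖)]
  have hab : β^2 * (‖x‖*‖y‖) ≤ ⟪x,e⟫ * ⟪y,e⟫ := by nlinarith
  have h1n : (0:ℝ) ≤ (1 - β^2) * ‖x‖^2 := le_trans (sq_nonneg _) h1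
  have hb2 : (0:ℝ) ≤ 1 - β^2 := by nlinarith
  have hRnn : (0:ℝ) ≤ (1-β^2) * (‖x‖*‖y‖) := mul_nonneg hb2 (mul_nonneg hxnn hynn)
  have hsq : (‖wx‖*‖wy‖)^2 ≤ ((1-β^2) * (‖x‖*‖y‖))^2 := by
    have := mul_le_mul h1 h2 (sq_nonneg ‖wy‖) h1n
    calc (‖wx‖*‖wy‖)^2 = ‖wx‖^2 * ‖wy‖^2 := by ring
      _ ≤ ((1-β^2)*‖x‖^2) * ((1-β^2)*‖y‖^2) := this
      _ = ((1-β^2) * (‖x‖*‖y‖))^2 := by ring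
  have hprod : ‖wx‖*‖wy‖ ≤ (1-β^2) * (‖x‖*‖y‖) := by
    have h := Real.sqrt_le_sqrt hsq
    rwa [Real.sqrt_sq (mul_nonneg hwxnn hwynn), Real.sqrt_sq hRnn] at h
  linarith [hinner ▸ hcs]

lemma sum_norm_lower {E : Type*} [NormedAddCommGroup E] [InnerProductSpace ℝ E]
    (u v : E) (c γ W : ℝ) (hc0 : 0 ≤ c) (hc1 : c ≤ 1) (hγ0 : 0 ≤ γ) (hγ1 : γ ≤ 1)
    (hW : 0 ≤ W) (hip : c * (‖u‖ * W) ≤ ⟪u, v⟫) (hv : γ * W ≤ ‖v‖) :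
    ‖u‖ + c * γ * W ≤ ‖u + v‖ := by
  have hA0 : (0:ℝ) ≤ ‖u‖ := norm_nonneg u
  have hV0 : (0:ℝ) ≤ ‖v‖ := norm_nonneg v
  have hγW : 0 ≤ γ * W := mul_nonneg hγ0 hW
  have hsq : (‖u‖ + c * γ * W)^2 ≤ ‖u + v‖^2 := by
    rw [norm_add_sq_real]
    have h1 : (γ*W)*(γ*W) ≤ ‖v‖ * ‖v‖ := mul_le_mul hv hv hγW hV0
    have e1 : 0 ≤ c * ‖u‖ * W * (1 - γ) :=
      mul_nonneg (mul_nonneg (mul_nonneg hc0 hA0) hW) (by linarith)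
    have e2 : 0 ≤ (1 - c^2) * ((γ*W)*(γ*W)) :=
      mul_nonneg (by nlinarith) (mul_nonneg hγW hγW)
    nlinarith [hip, h1, e1, e2]
  have hL0 : 0 ≤ ‖u‖ + c * γ * W := by positivity
  have h := Real.sqrt_le_sqrt hsq
  rwa [Real.sqrt_sq hL0, Real.sqrt_sq (norm_nonneg _)] at h

set_option maxHeartbeats 1000000 in
/-- Greedy cost bound: in the setting of the greedy covering lemma, if item costs
`u k > 0` all lie within a multiplicative factor `1+ε` of each other and the feasible
set `S*` has size at least `1/ε`, then the cost of the greedy solution (the first `m`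
items, `m` least with `‖Σ_{k<m} q k‖ ≥ C`) is at most
`(1/(1-5ε) + ε)(1+ε)` times the cost of `S*`. -/
theorem greedy_cover_cost (r n : ℕ) (ε : ℝ) (hε0 : 0 < ε) (hε1 : ε < 1/5)
    (ξ : EuclideanSpace ℝ (Fin r)) (hξ0 : ξ ≠ 0) (hξ : ∀ i, 0 ≤ ξ i)
    (q : ℕ → EuclideanSpace ℝ (Fin r))
    (hq0 : ∀ k < n, q k ≠ 0)
    (hqnn : ∀ k < n, ∀ i, 0 ≤ q k i)
    (hord : ∀ k k', k ≤ k' → k' < n → ‖q k'‖ ≤ ‖q k‖)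
    (hang : ∀ k < n, ⟪q k, ξ⟫ ≥ (1 - ε) * ‖q k‖ * ‖ξ‖)
    (u : ℕ → ℝ)
    (hupos : ∀ k < n, 0 < u k)
    (hucomp : ∀ k < n, ∀ k' < n, u k ≤ (1 + ε) * u k')
    (C : ℝ) (hC : 0 < C)
    (S : Finset ℕ) (hSsub : S ⊆ Finset.range n)
    (hScov : C ≤ ‖∑ k ∈ S, q k‖)
    (hScard : 1/ε ≤ (S.card : ℝ))
    (hall : C ≤ ‖∑ k ∈ Finset.range n, q k‖)
    (m : ℕ)
    (hm : C ≤ ‖∑ k ∈ Finset.range m, q k‖)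
    (hmin : ∀ m' < m, ‖∑ k ∈ Finset.range m', q k‖ < C) :
    ∑ k ∈ Finset.range m, u k ≤
      (1/(1 - 5*ε) + ε) * (1 + ε) * ∑ k ∈ S, u k := by
  have h5 : (0:ℝ) < 1 - 5*ε := by linarith
  have hcoef : (0:ℝ) < 1/(1 - 5*ε) + ε := by positivity
  have hS0 : (0:ℝ) < S.card := lt_of_lt_of_le (by positivity) hScard
  have hεS : (1:ℝ) ≤ ε * S.card := by
    rw [div_le_iff₀ hε0] at hScard; linarith [hScard]
  have hSne : S.Nonempty := Finset.card_pos.mp (by exact_mod_cast hS0)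
  have hQ0 : (0:ℝ) < ∑ j ∈ S, u j :=
    Finset.sum_pos (fun j hj => hupos j (Finset.mem_range.mp (hSsub hj))) hSne
  -- trivial case m = 0
  rcases Nat.eq_zero_or_pos m with hm0 | hm1
  · subst hm0; simp only [Finset.range_zero, Finset.sum_empty]
    positivity
  -- m ≤ n
  have hmn : m ≤ n := by
    by_contra h
    exact absurd hall (not_le.mpr (hmin n (lt_of_not_ge h)))
  have hξn : (0:ℝ) < ‖ξ‖ := norm_pos_iff.mpr hξ0
  set c : ℝ := 2*(1-ε)^2 - 1 with hc
  have hc0 : 0 ≤ c := by rw [hc]; nlinarith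
  have hc5 : 1 - 5*ε ≤ c * (1-ε) := by
    rw [hc]
    nlinarith [mul_nonneg (mul_nonneg hε0.le hε0.le) (show (0:ℝ) ≤ 3 - ε by linarith)]
  have hc1 : c ≤ 1 := by rw [hc]; nlinarith
  -- pairwise inner product bound
  have pair : ∀ j < n, ∀ k < n, c * (‖q j‖ * ‖q k‖) ≤ ⟪q j, q k⟫ := by
    intro j hj k hk
    have halge : ∀ i, i < n → (1-ε) * ‖q i‖ ≤ ⟪q i, ‖ξ‖⁻¹ • ξ⟫ := by
      intro i hi
      rw [real_inner_smul_right]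
      have h := hang i hi
      have := mul_le_mul_of_nonneg_left h.le (inv_nonneg.mpr hξn.le)
      calc (1-ε) * ‖q i‖ = ‖ξ‖⁻¹ * ((1-ε) * ‖q i‖ * ‖ξ‖) := by field_simp
        _ ≤ ‖ξ‖⁻¹ * ⟪q i, ξ⟫ := this
    have hne : ‖(‖ξ‖⁻¹ • ξ)‖ = 1 := by
      rw [norm_smul, norm_inv, norm_norm, inv_mul_cancel₀ hξn.ne']
    exact aligned_inner_unit (1-ε) (by linarith) (by linarith) _ _ _ hne
      (halge j hj) (halge k hk)
  -- alignment sum bound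
  have align : ∀ T : Finset ℕ, (∀ k ∈ T, k < n) →
      (1-ε) * (∑ k ∈ T, ‖q k‖) ≤ ‖∑ k ∈ T, q k‖ := by
    intro T hT
    have h1 : (1-ε) * (∑ k ∈ T, ‖q k‖) * ‖ξ‖ ≤ ⟪∑ k ∈ T, q k, ξ⟫ := by
      rw [sum_inner]
      calc (1-ε) * (∑ k ∈ T, ‖q k‖) * ‖ξ‖ = ∑ k ∈ T, (1-ε) * ‖q k‖ * ‖ξ‖ := by
            rw [Finset.mul_sum, Finset.sum_mul]
        _ ≤ ∑ k ∈ T, ⟪q k, ξ⟫ := Finset.sum_le_sum (fun k hk => (hang k (hT k hk)))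
    have h2 : ⟪∑ k ∈ T, q k, ξ⟫ ≤ ‖∑ k ∈ T, q k‖ * ‖ξ‖ := real_inner_le_norm _ _
    have := h1.trans h2
    exact le_of_mul_le_mul_right this hξn
  -- the key cardinality bound : (1-5ε)(m-1) ≤ |S|
  set t := m - 1 with htdef
  have htm : t < m := Nat.sub_lt hm1 one_pos
  have hmt : m = t + 1 := (Nat.succ_pred_eq_of_pos hm1).symm
  have hkey : (1 - 5*ε) * (t:ℝ) ≤ (S.card:ℝ) := by
    rcases Nat.eq_zero_or_pos t with ht0 | ht1
    · rw [ht0]; push_cast; nlinarith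
    have htn : t < n := lt_of_lt_of_le htm hmn
    have ht1n : t - 1 < n := lt_of_le_of_lt (Nat.sub_le t 1) htn
    set x := ‖q (t-1)‖ with hxdef
    have hx0 : 0 < x := norm_pos_iff.mpr (hq0 (t-1) ht1n)
    set S₁ := S.filter (fun k => k < t) with hS₁
    set S₂ := S.filter (fun k => ¬ k < t) with hS₂
    set T := (Finset.range t).filter (fun k => ¬ k ∈ S) with hT
    have hfilter : (Finset.range t).filter (fun k => k ∈ S) = S₁ := by
      ext k; simp [hS₁, Finset.mem_filter, Finset.mem_range, and_comm]
    have hsplit : ∑ k ∈ Finset.range t, q k = (∑ k ∈ S₁, q k) + (∑ k ∈ T, q k) := by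
      rw [← Finset.sum_filter_add_sum_filter_not (Finset.range t) (fun k => k ∈ S) q, hfilter]
    have hcard1 : S₁.card + S₂.card = S.card :=
      Finset.card_filter_add_card_filter_not _
    have hcardt : S₁.card + T.card = t := by
      have := Finset.card_filter_add_card_filter_not
        (s := Finset.range t) (p := fun k => k ∈ S)
      rwa [hfilter, Finset.card_range] at this
    have hSsum : ∑ k ∈ S, q k = (∑ k ∈ S₁, q k) + (∑ k ∈ S₂, q k) :=
      (Finset.sum_filter_add_sum_filter_not S (fun k => k < t) q).symm
    -- bound on the tail of S
    have hB : ‖∑ k ∈ S₂, q k‖ ≤ (S₂.card : ℝ) * x := by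
      calc ‖∑ k ∈ S₂, q k‖ ≤ ∑ k ∈ S₂, ‖q k‖ := norm_sum_le _ _
        _ ≤ ∑ k ∈ S₂, x := by
            apply Finset.sum_le_sum
            intro k hk
            rw [hS₂, Finset.mem_filter] at hk
            exact hord (t-1) k (le_trans (Nat.sub_le t 1) (not_lt.mp hk.2))
              (Finset.mem_range.mp (hSsub hk.1))
        _ = (S₂.card : ℝ) * x := by rw [Finset.sum_const, nsmul_eq_mul]
    have hA : C - (S₂.card : ℝ) * x ≤ ‖∑ k ∈ S₁, q k‖ := by
      have := norm_add_le (∑ k ∈ S₁, q k) (∑ k ∈ S₂, q k)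
      rw [← hSsum] at this
      linarith [hScov.trans this]
    set W := ∑ k ∈ T, ‖q k‖ with hW
    have hTmem : ∀ k ∈ T, k < t := by
      intro k hk; rw [hT, Finset.mem_filter, Finset.mem_range] at hk; exact hk.1
    have hWl : (T.card : ℝ) * x ≤ W := by
      rw [hW]
      calc (T.card : ℝ) * x = ∑ k ∈ T, x := by rw [Finset.sum_const, nsmul_eq_mul]
        _ ≤ ∑ k ∈ T, ‖q k‖ := by
            apply Finset.sum_le_sum
            intro k hk
            exact hord k (t-1) (Nat.le_sub_one_of_lt (hTmem k hk)) ht1n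
    have hW0 : 0 ≤ W := le_trans (mul_nonneg (Nat.cast_nonneg _) hx0.le) hWl
    have hvW : (1-ε) * W ≤ ‖∑ k ∈ T, q k‖ :=
      align T (fun k hk => lt_trans (hTmem k hk) htn)
    -- inner product between the two parts
    have hS₁n : ∀ k ∈ S₁, k < n := by
      intro k hk
      rw [hS₁, Finset.mem_filter] at hk
      exact Finset.mem_range.mp (hSsub hk.1)
    have hTn : ∀ k ∈ T, k < n := fun k hk => lt_trans (hTmem k hk) htn
    have hip : c * (‖∑ k ∈ S₁, q k‖ * W) ≤ ⟪∑ k ∈ S₁, q k, ∑ k ∈ T, q k⟫ := by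
      rw [sum_inner]
      have step : ∀ j ∈ S₁, c * (‖q j‖ * W) ≤ ⟪q j, ∑ k ∈ T, q k⟫ := by
        intro j hj
        rw [inner_sum]
        calc c * (‖q j‖ * W) = ∑ k ∈ T, c * (‖q j‖ * ‖q k‖) := by
              rw [hW, Finset.mul_sum, Finset.mul_sum]
          _ ≤ ∑ k ∈ T, ⟪q j, q k⟫ :=
              Finset.sum_le_sum (fun k hk => pair j (hS₁n j hj) k (hTn k hk))
      calc c * (‖∑ k ∈ S₁, q k‖ * W) ≤ c * ((∑ j ∈ S₁, ‖q j‖) * W) := by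
            apply mul_le_mul_of_nonneg_left _ hc0
            exact mul_le_mul_of_nonneg_right (norm_sum_le _ _) hW0
        _ = ∑ j ∈ S₁, c * (‖q j‖ * W) := by
            rw [Finset.sum_mul, Finset.mul_sum]
        _ ≤ ∑ j ∈ S₁, ⟪q j, ∑ k ∈ T, q k⟫ := Finset.sum_le_sum step
    -- norm lower bound on the prefix sum
    set A := ‖∑ k ∈ S₁, q k‖ with hAdef
    have hA0 : 0 ≤ A := norm_nonneg _
    have hlow : A + c * (1-ε) * W ≤ ‖(∑ k ∈ S₁, q k) + (∑ k ∈ T, q k)‖ :=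
      sum_norm_lower _ _ c (1-ε) W hc0 hc1 (by linarith) (by linarith) hW0 hip hvW
    have hPt : ‖∑ k ∈ Finset.range t, q k‖ < C := hmin t htm
    rw [hsplit] at hPt
    -- combine
    have hfinal : (1-5*ε) * ((T.card:ℝ) * x) < (S₂.card : ℝ) * x := by
      have h1 : c * (1-ε) * W ≥ (1-5*ε) * ((T.card:ℝ) * x) := by
        calc c * (1-ε) * W ≥ (1-5*ε) * W := mul_le_mul_of_nonneg_right hc5 hW0
          _ ≥ (1-5*ε) * ((T.card:ℝ) * x) := mul_le_mul_of_nonneg_left hWl h5.le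
      linarith [hA, hlow, hPt]
    have hTS : (1-5*ε) * (T.card:ℝ) ≤ (S₂.card : ℝ) := by
      nlinarith [hfinal, hx0]
    have e1 : (S₁.card:ℝ) + S₂.card = S.card := by exact_mod_cast hcard1
    have e2 : (S₁.card:ℝ) + T.card = t := by exact_mod_cast hcardt
    nlinarith [hTS, e1, e2, Nat.cast_nonneg (α := ℝ) S₁.card, Nat.cast_nonneg (α := ℝ) S₂.card,
      Nat.cast_nonneg (α := ℝ) T.card]
  -- m ≤ (1/(1-5ε)+ε)|S|
  have hm2 : (m:ℝ) ≤ (1/(1 - 5*ε) + ε) * S.card := by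
    have hmr : (m:ℝ) = (t:ℝ) + 1 := by rw [hmt]; push_cast; ring
    have ht : (t:ℝ) ≤ S.card / (1 - 5*ε) := by
      rw [le_div_iff₀ h5]; linarith [hkey]
    have : S.card / (1 - 5*ε) + ε * S.card = (1/(1 - 5*ε) + ε) * S.card := by
      ring
    linarith [ht, hεS, this.le]
  -- cost comparison
  have hsum : (S.card:ℝ) * (∑ k ∈ Finset.range m, u k) ≤
      (1+ε) * m * (∑ j ∈ S, u j) := by
    calc (S.card:ℝ) * (∑ k ∈ Finset.range m, u k)
        = ∑ k ∈ Finset.range m, ∑ j ∈ S, u k := by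
          rw [Finset.mul_sum]
          apply Finset.sum_congr rfl
          intro k _
          rw [Finset.sum_const, nsmul_eq_mul]
      _ ≤ ∑ k ∈ Finset.range m, ∑ j ∈ S, (1+ε) * u j := by
          apply Finset.sum_le_sum
          intro k hk
          apply Finset.sum_le_sum
          intro j hj
          exact hucomp k (lt_of_lt_of_le (Finset.mem_range.mp hk) hmn) j
            (Finset.mem_range.mp (hSsub hj))
      _ = (1+ε) * m * (∑ j ∈ S, u j) := by
          rw [Finset.sum_const, Finset.card_range, nsmul_eq_mul, ← Finset.mul_sum]
          ring
  -- finish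
  have hfin : (S.card:ℝ) * (∑ k ∈ Finset.range m, u k) ≤
      (S.card:ℝ) * ((1/(1 - 5*ε) + ε) * (1 + ε) * ∑ j ∈ S, u j) := by
    calc (S.card:ℝ) * (∑ k ∈ Finset.range m, u k) ≤ (1+ε) * m * (∑ j ∈ S, u j) := hsum
      _ ≤ (1+ε) * ((1/(1 - 5*ε) + ε) * S.card) * (∑ j ∈ S, u j) := by
          apply mul_le_mul_of_nonneg_right _ hQ0.le
          apply mul_le_mul_of_nonneg_left hm2 (by linarith)
      _ = (S.card:ℝ) * ((1/(1 - 5*ε) + ε) * (1 + ε) * ∑ j ∈ S, u j) := by ring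
  exact le_of_mul_le_mul_left hfin hS0
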